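/- arXiv:2302.04067 — 4 statements merged into one kernel-verified Lean document; each statement's English description precedes it below -/
import Mathlib

section
/- The coefficient sequence of the Gaussian polynomial binom{11}{3}_q has equal consecutive coefficients at positions 10 and 11: p_{10}(8,3) = p_{11}(8,3) = 12, even though 11 < ⌊8·3/2⌋ = 12. -/
/-- The coefficient of `q^k` in the Gaussian polynomial (q-binomial coefficient)
`binom{ℓ+m}{m}_q = ∏_{i=1}^m (1-q^(ℓ+i))/(1-q^i)`, computed in `ℚ⟦q⟧`. -/
noncomputable def gaussCoeff (ℓ m k : ℕ) : ℚ :=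
  PowerSeries.coeff (R := ℚ) k
    ((∏ i ∈ Finset.range m, (1 - (PowerSeries.X : PowerSeries ℚ) ^ (ℓ + i + 1))) *
     (∏ i ∈ Finset.range m, (1 - (PowerSeries.X : PowerSeries ℚ) ^ (i + 1)))⁻¹)

noncomputable def gaussP : PowerSeries ℚ :=
  letI X : PowerSeries ℚ := PowerSeries.X
  letI C : ℚ → PowerSeries ℚ := PowerSeries.C (R := ℚ)
  C 1 +
    X^1 +
    C 2*X^2 +
    C 3*X^3 +
    C 4*X^4 +
    C 5*X^5 +
    C 7*X^6 +
    C 8*X^7 +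
    C 10*X^8 +
    C 11*X^9 +
    C 12*X^10 +
    C 12*X^11 +
    C 13*X^12 +
    C 12*X^13 +
    C 12*X^14 +
    C 11*X^15 +
    C 10*X^16 +
    C 8*X^17 +
    C 7*X^18 +
    C 5*X^19 +
    C 4*X^20 +
    C 3*X^21 +
    C 2*X^22 +
    X^23 +
    X^24

lemma coeffC (n : ℕ) (c : ℚ) (f : PowerSeries ℚ) :
    PowerSeries.coeff (R := ℚ) n ((PowerSeries.C (R := ℚ) c) * f) = c * PowerSeries.coeff (R := ℚ) n f :=
  PowerSeries.coeff_C_mul n f c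

lemma key (k : ℕ) : gaussCoeff 8 3 k = PowerSeries.coeff (R := ℚ) k gaussP := by
  unfold gaussCoeff
  have hD : (∏ i ∈ Finset.range 3, (1 - (PowerSeries.X : PowerSeries ℚ) ^ (i + 1))) *
      (∏ i ∈ Finset.range 3, (1 - (PowerSeries.X : PowerSeries ℚ) ^ (i + 1)))⁻¹ = 1 := by
    apply PowerSeries.mul_inv_cancel
    simp [Finset.prod_range_succ]
  have hN : (∏ i ∈ Finset.range 3, (1 - (PowerSeries.X : PowerSeries ℚ) ^ (8 + i + 1))) =
      gaussP * (∏ i ∈ Finset.range 3, (1 - (PowerSeries.X : PowerSeries ℚ) ^ (i + 1))) := by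
    simp only [Finset.prod_range_succ, Finset.prod_range_zero, gaussP, map_ofNat, map_one]
    ring
  rw [hN, mul_assoc, hD, mul_one]

/-- binom{11}{3}_q has equal coefficients 12 at positions 10 and 11, with 11 < ⌊8·3/2⌋. -/
theorem coeff_eq_at_10_11 :
    gaussCoeff 8 3 10 = 12 ∧ gaussCoeff 8 3 11 = 12 ∧ 11 < 8 * 3 / 2 := by
  refine ⟨?_, ?_, by norm_num⟩ <;>
  · rw [key]
    simp only [gaussP, map_add, coeffC, PowerSeries.coeff_X_pow, PowerSeries.coeff_X,
      PowerSeries.coeff_one]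
    norm_num
end

section
/- For all integers ℓ ≥ 1 and all k with 1 ≤ k ≤ ⌊3ℓ/2⌋ - 4, the coefficients of binom{ℓ+3}{3}_q satisfy the strict inequality p_{k+1}(ℓ,3) - p_k(ℓ,3) ≥ 1, with no exceptions. -/
/-- Number of partitions of `j` into parts of size 2 and 3. -/
def osm3d (j : ℕ) : ℕ := (j + 2) / 2 - (j + 2) / 3

/-- Generating series of `osm3d`. -/
noncomputable def osm3D : PowerSeries ℚ := PowerSeries.mk fun j => (osm3d j : ℚ)

open PowerSeries in
lemma osm3_BD : ((1 - X ^ 2) * (1 - X ^ 3) : ℚ⟦X⟧) * osm3D = 1 := by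
  have hexp : ((1 - X ^ 2) * (1 - X ^ 3) : ℚ⟦X⟧) * osm3D
      = osm3D - X ^ 2 * osm3D - X ^ 3 * osm3D + X ^ 5 * osm3D := by ring
  ext n
  rw [hexp]
  simp only [map_sub, map_add, coeff_X_pow_mul', coeff_one, osm3D, coeff_mk]
  split_ifs with h1 h2 h3 h4 <;>
  · first
    | (exfalso; omega)
    | (have key : osm3d n + osm3d (n - 5) = osm3d (n - 2) + osm3d (n - 3) := by
         unfold osm3d; omega
       have key' : (osm3d n : ℚ) + osm3d (n - 5) = osm3d (n - 2) + osm3d (n - 3) := by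
         exact_mod_cast key
       push_cast
       linarith)
    | (have key : osm3d n = osm3d (n - 2) + osm3d (n - 3) := by unfold osm3d; omega
       have key' : (osm3d n : ℚ) = osm3d (n - 2) + osm3d (n - 3) := by exact_mod_cast key
       push_cast
       linarith)
    | (have key : osm3d n = osm3d (n - 2) := by unfold osm3d; omega
       have key' : (osm3d n : ℚ) = osm3d (n - 2) := by exact_mod_cast key
       push_cast
       linarith)
    | (have key : osm3d n = 1 := by unfold osm3d; omega
       have key' : (osm3d n : ℚ) = 1 := by exact_mod_cast key
       push_cast
       linarith)
    | (have key : osm3d n = 0 := by unfold osm3d; omega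
       have key' : (osm3d n : ℚ) = 0 := by exact_mod_cast key
       push_cast
       linarith)

lemma osm3_window (t : ℕ) (h : 2 ≤ t) :
    osm3d t + osm3d (t - 1) + osm3d (t - 2) = t / 2 + 1 := by
  obtain ⟨q, r, hr, ht⟩ : ∃ q r, r < 6 ∧ t = 6 * q + r := ⟨t / 6, t % 6, by omega, by omega⟩
  subst ht; unfold osm3d; interval_cases r <;> omega

lemma osm3_key3 (ℓ k : ℕ) (h2 : k ≤ 3 * ℓ / 2 - 4) (hc : ℓ + 2 ≤ k) :
    osm3d (k - ℓ) + osm3d (k - (ℓ + 1)) + osm3d (k - (ℓ + 2)) + 1 ≤ osm3d (k + 1) := by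
  have e1 : k - (ℓ + 1) = (k - ℓ) - 1 := by omega
  have e2 : k - (ℓ + 2) = (k - ℓ) - 2 := by omega
  rw [e1, e2, osm3_window (k - ℓ) (by omega)]
  unfold osm3d
  omega

theorem one_strict_m3 (ℓ : ℕ) (hℓ : 1 ≤ ℓ) (k : ℕ) (h1 : 1 ≤ k)
    (h2 : k ≤ 3 * ℓ / 2 - 4) :
    gaussCoeff ℓ 3 (k + 1) - gaussCoeff ℓ 3 k ≥ 1 := by
  open PowerSeries in
  set N : ℚ⟦X⟧ := (1 - X ^ (ℓ + 1)) * (1 - X ^ (ℓ + 2)) * (1 - X ^ (ℓ + 3)) with hN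
  set A : ℚ⟦X⟧ := (1 - X ^ 1) * (1 - X ^ 2) * (1 - X ^ 3) with hA
  have hconst : PowerSeries.constantCoeff (R := ℚ) A = 1 := by
    rw [hA]; simp
  have hAne : PowerSeries.constantCoeff (R := ℚ) A ≠ 0 := by rw [hconst]; norm_num
  have hAinv : A * A⁻¹ = 1 := PowerSeries.mul_inv_cancel A hAne
  have hBne : ((1 - X ^ 2) * (1 - X ^ 3) : ℚ⟦X⟧) ≠ 0 := by
    intro h
    have : PowerSeries.constantCoeff (R := ℚ) (((1 - X ^ 2) * (1 - X ^ 3) : ℚ⟦X⟧)) = 1 := by simp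
    rw [h] at this
    simp at this
  have hmain : (1 - X) * (N * A⁻¹) = N * osm3D := by
    apply mul_right_cancel₀ hBne
    have lhs : (1 - X) * (N * A⁻¹) * ((1 - X ^ 2) * (1 - X ^ 3))
        = N * (A * A⁻¹) := by rw [hA]; ring
    have rhs : N * osm3D * ((1 - X ^ 2) * (1 - X ^ 3))
        = N * (((1 - X ^ 2) * (1 - X ^ 3)) * osm3D) := by ring
    rw [lhs, rhs, hAinv, osm3_BD]
  have hprodN : (∏ i ∈ Finset.range 3, (1 - (X : ℚ⟦X⟧) ^ (ℓ + i + 1))) = N := by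
    rw [Finset.prod_range_succ, Finset.prod_range_succ, Finset.prod_range_succ,
      Finset.prod_range_zero, one_mul, hN]
  have hprodA : (∏ i ∈ Finset.range 3, (1 - (X : ℚ⟦X⟧) ^ (i + 1))) = A := by
    rw [Finset.prod_range_succ, Finset.prod_range_succ, Finset.prod_range_succ,
      Finset.prod_range_zero, one_mul, hA]
  have hdiff : gaussCoeff ℓ 3 (k + 1) - gaussCoeff ℓ 3 k
      = PowerSeries.coeff (R := ℚ) (k + 1) (N * osm3D) := by
    rw [← hmain]
    unfold gaussCoeff
    rw [hprodN, hprodA]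
    have : ((1 - X) * (N * A⁻¹) : ℚ⟦X⟧) = N * A⁻¹ - X * (N * A⁻¹) := by ring
    rw [this, map_sub, PowerSeries.coeff_succ_X_mul]
  have hexp : N * osm3D = osm3D - X ^ (ℓ + 1) * osm3D - X ^ (ℓ + 2) * osm3D
      - X ^ (ℓ + 3) * osm3D + X ^ (2 * ℓ + 3) * osm3D + X ^ (2 * ℓ + 4) * osm3D
      + X ^ (2 * ℓ + 5) * osm3D - X ^ (3 * ℓ + 6) * osm3D := by
    rw [hN]; ring
  rw [hdiff, hexp]
  simp only [map_sub, map_add, PowerSeries.coeff_X_pow_mul', osm3D, PowerSeries.coeff_mk]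
  rw [if_neg (by omega : ¬(2 * ℓ + 3 ≤ k + 1)), if_neg (by omega : ¬(2 * ℓ + 4 ≤ k + 1)),
    if_neg (by omega : ¬(2 * ℓ + 5 ≤ k + 1)), if_neg (by omega : ¬(3 * ℓ + 6 ≤ k + 1))]
  split_ifs with ha hb hc <;>
  · first
    | (exfalso; omega)
    | (have key : osm3d (k - ℓ) + osm3d (k - (ℓ + 1))
          + osm3d (k - (ℓ + 2)) + 1 ≤ osm3d (k + 1) := osm3_key3 ℓ k h2 (by omega)
       have key' : (osm3d (k - ℓ) : ℚ) + osm3d (k - (ℓ + 1))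
          + osm3d (k - (ℓ + 2)) + 1 ≤ osm3d (k + 1) := by exact_mod_cast key
       push_cast
       linarith)
    | (have key : osm3d (k - ℓ) + osm3d (k - (ℓ + 1)) + 1
          ≤ osm3d (k + 1) := by unfold osm3d; omega
       have key' : (osm3d (k - ℓ) : ℚ) + osm3d (k - (ℓ + 1)) + 1
          ≤ osm3d (k + 1) := by exact_mod_cast key
       push_cast
       linarith)
    | (have key : osm3d (k - ℓ) + 1 ≤ osm3d (k + 1) := by unfold osm3d; omega
       have key' : (osm3d (k - ℓ) : ℚ) + 1 ≤ osm3d (k + 1) := by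
         exact_mod_cast key
       push_cast
       linarith)
    | (have key : 1 ≤ osm3d (k + 1) := by unfold osm3d; omega
       have key' : (1 : ℚ) ≤ osm3d (k + 1) := by exact_mod_cast key
       push_cast
       linarith)
end

section
/- For all integers ℓ ≥ 1 and all k with 13 ≤ k ≤ ⌊3ℓ/2⌋ - 10, the coefficients of binom{ℓ+3}{3}_q satisfy p_{k+1}(ℓ,3) - p_k(ℓ,3) ≥ 3, with no exceptions. -/
def cc (n : ℕ) : ℕ := (n * n + 6 * n + 12) / 12
def ee (m : ℕ) : ℕ := (m + 1) / 6 + (if (m + 1) % 6 = 1 then 0 else 1)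

lemma cc_add_six (n : ℕ) : cc (n + 6) = cc n + n + 6 := by
  unfold cc
  have h : (n+6)*(n+6) + 6*(n+6) + 12 = (n*n + 6*n + 12) + (n+6) * 12 := by ring
  rw [h, Nat.add_mul_div_right _ _ (by norm_num : (0:ℕ) < 12)]
  omega

lemma ee_add_six (n : ℕ) : ee (n + 6) = ee n + 1 := by
  unfold ee
  have h : (n + 6 + 1) % 6 = (n + 1) % 6 := by omega
  rw [h]
  split_ifs <;> omega

lemma cstep (n : ℕ) : cc (n + 1) = cc n + ee n := by
  induction n using Nat.strong_induction_on with
  | _ n ih =>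
    match n with
    | 0 | 1 | 2 | 3 | 4 | 5 => decide
    | (p+6) =>
      have h1 : cc (p+6+1) = cc (p+1) + (p+1) + 6 := by
        rw [show p+6+1 = p+1+6 from by omega, cc_add_six]
      have h2 := cc_add_six p
      have h3 := ee_add_six p
      have h4 := ih p (by omega)
      omega

lemma ccid (m : ℕ) : cc (m+6) + cc (m+2) + cc (m+1) = cc (m+5) + cc (m+4) + cc m := by
  induction m using Nat.strong_induction_on with
  | _ m ih =>
    match m with
    | 0 | 1 | 2 | 3 | 4 | 5 => decide
    | (p+6) =>
      have h1 := cc_add_six (p+6)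
      have h2 : cc (p+6+2) = cc (p+2) + (p+2) + 6 := by
        rw [show p+6+2 = p+2+6 from by omega, cc_add_six]
      have h3 : cc (p+6+1) = cc (p+1) + (p+1) + 6 := by
        rw [show p+6+1 = p+1+6 from by omega, cc_add_six]
      have h4 : cc (p+6+5) = cc (p+5) + (p+5) + 6 := by
        rw [show p+6+5 = p+5+6 from by omega, cc_add_six]
      have h5 : cc (p+6+4) = cc (p+4) + (p+4) + 6 := by
        rw [show p+6+4 = p+4+6 from by omega, cc_add_six]
      have h6 := cc_add_six p
      have h0 := ih p (by omega)
      omega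

lemma ee_facts (x : ℕ) : (x+1)/6 ≤ ee x ∧ ee x ≤ (x+1)/6 + 1
    ∧ ((x+1) % 6 = 1 → ee x = (x+1)/6) ∧ ((x+1) % 6 ≠ 1 → ee x = (x+1)/6 + 1) := by
  unfold ee
  refine ⟨?_, ?_, ?_, ?_⟩ <;> split_ifs <;> omega

lemma keyZ (ℓ k : ℕ) (h1 : 13 ≤ k) (h2 : k ≤ 3 * ℓ / 2 - 10) :
    ((cc (k+1) : ℤ) - (if ℓ+1 ≤ k+1 then (cc (k+1-(ℓ+1)) : ℤ) else 0)
      - (if ℓ+2 ≤ k+1 then (cc (k+1-(ℓ+2)) : ℤ) else 0)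
      - (if ℓ+3 ≤ k+1 then (cc (k+1-(ℓ+3)) : ℤ) else 0))
    - ((cc k : ℤ) - (if ℓ+1 ≤ k then (cc (k-(ℓ+1)) : ℤ) else 0)
      - (if ℓ+2 ≤ k then (cc (k-(ℓ+2)) : ℤ) else 0)
      - (if ℓ+3 ≤ k then (cc (k-(ℓ+3)) : ℤ) else 0)) ≥ 3 := by
  have hℓ : 16 ≤ ℓ := by omega
  have s0 : cc (k+1) = cc k + ee k := cstep k
  have E0 := ee_facts k
  have c0 : cc 0 = 1 := rfl
  have c1 : cc 1 = 1 := rfl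
  have c2 : cc 2 = 2 := rfl
  by_cases hA : k < ℓ
  · rw [if_neg (by omega : ¬ ℓ+1 ≤ k+1), if_neg (by omega : ¬ ℓ+2 ≤ k+1),
        if_neg (by omega : ¬ ℓ+3 ≤ k+1), if_neg (by omega : ¬ ℓ+1 ≤ k),
        if_neg (by omega : ¬ ℓ+2 ≤ k), if_neg (by omega : ¬ ℓ+3 ≤ k)]
    omega
  by_cases hB : k = ℓ
  · subst hB
    rw [if_pos (by omega : k+1 ≤ k+1), if_neg (by omega : ¬ k+2 ≤ k+1),
        if_neg (by omega : ¬ k+3 ≤ k+1), if_neg (by omega : ¬ k+1 ≤ k),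
        if_neg (by omega : ¬ k+2 ≤ k), if_neg (by omega : ¬ k+3 ≤ k),
        show k+1-(k+1) = 0 from by omega]
    omega
  by_cases hC : k = ℓ+1
  · rw [if_pos (by omega : ℓ+1 ≤ k+1), if_pos (by omega : ℓ+2 ≤ k+1),
        if_neg (by omega : ¬ ℓ+3 ≤ k+1), if_pos (by omega : ℓ+1 ≤ k),
        if_neg (by omega : ¬ ℓ+2 ≤ k), if_neg (by omega : ¬ ℓ+3 ≤ k),
        show k+1-(ℓ+1) = 1 from by omega, show k+1-(ℓ+2) = 0 from by omega,
        show k-(ℓ+1) = 0 from by omega]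
    omega
  by_cases hD : k = ℓ+2
  · rw [if_pos (by omega : ℓ+1 ≤ k+1), if_pos (by omega : ℓ+2 ≤ k+1),
        if_pos (by omega : ℓ+3 ≤ k+1), if_pos (by omega : ℓ+1 ≤ k),
        if_pos (by omega : ℓ+2 ≤ k), if_neg (by omega : ¬ ℓ+3 ≤ k),
        show k+1-(ℓ+1) = 2 from by omega, show k+1-(ℓ+2) = 1 from by omega,
        show k+1-(ℓ+3) = 0 from by omega, show k-(ℓ+1) = 1 from by omega,
        show k-(ℓ+2) = 0 from by omega]
    omega
  · have hE : ℓ+3 ≤ k := by omega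
    rw [if_pos (by omega : ℓ+1 ≤ k+1), if_pos (by omega : ℓ+2 ≤ k+1),
        if_pos (by omega : ℓ+3 ≤ k+1), if_pos (by omega : ℓ+1 ≤ k),
        if_pos (by omega : ℓ+2 ≤ k), if_pos (by omega : ℓ+3 ≤ k),
        show k+1-(ℓ+1) = (k-(ℓ+1))+1 from by omega,
        show k+1-(ℓ+2) = (k-(ℓ+2))+1 from by omega,
        show k+1-(ℓ+3) = (k-(ℓ+3))+1 from by omega]
    have f1 := cstep (k-(ℓ+1))
    have f2 := cstep (k-(ℓ+2))
    have f3 := cstep (k-(ℓ+3))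
    have E1 := ee_facts (k-(ℓ+1))
    have E2 := ee_facts (k-(ℓ+2))
    have E3 := ee_facts (k-(ℓ+3))
    omega

open PowerSeries in
/-- The generating function of `cc`. -/
noncomputable def CC : PowerSeries ℚ := PowerSeries.mk fun n => (cc n : ℚ)

open PowerSeries in
lemma coeff_CC (n : ℕ) : PowerSeries.coeff n CC = (cc n : ℚ) :=
  PowerSeries.coeff_mk n _

open PowerSeries in
lemma CC_mul_denom : CC * (∏ i ∈ Finset.range 3, (1 - (X : PowerSeries ℚ) ^ (i + 1))) = 1 := by
  have hD : (∏ i ∈ Finset.range 3, (1 - (X : PowerSeries ℚ) ^ (i + 1)))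
      = 1 - X - X^2 + X^4 + X^5 - X^6 := by
    rw [Finset.prod_range_succ, Finset.prod_range_succ, Finset.prod_range_succ,
      Finset.prod_range_zero, one_mul]
    norm_num
    ring
  rw [hD]
  have hE : CC * (1 - X - X^2 + X^4 + X^5 - X^6)
      = CC - CC * X^1 - CC * X^2 + CC * X^4 + CC * X^5 - CC * X^6 := by ring
  rw [hE]
  ext n
  simp only [map_sub, map_add, coeff_mul_X_pow', coeff_CC, coeff_one]
  rcases n with _|_|_|_|_|_|m
  · norm_num [cc]
  · norm_num [cc]
  · norm_num [cc]
  · norm_num [cc]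
  · norm_num [cc]
  · norm_num [cc]
  · have hc := ccid m
    have e1 : m+1+1+1+1+1+1 = m+6 := by omega
    rw [e1]
    rw [if_pos (by omega : 1 ≤ m+6), if_pos (by omega : 2 ≤ m+6),
        if_pos (by omega : 4 ≤ m+6), if_pos (by omega : 5 ≤ m+6),
        if_pos (by omega : 6 ≤ m+6), if_neg (by omega : ¬ m+6 = 0)]
    have e2 : m+6-1 = m+5 := by omega
    have e3 : m+6-2 = m+4 := by omega
    have e4 : m+6-4 = m+2 := by omega
    have e5 : m+6-5 = m+1 := by omega
    have e6 : m+6-6 = m := by omega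
    rw [e2, e3, e4, e5, e6]
    have : ((cc (m+6) + cc (m+2) + cc (m+1) : ℕ) : ℚ)
        = ((cc (m+5) + cc (m+4) + cc m : ℕ) : ℚ) := by exact_mod_cast hc
    push_cast at this
    linarith

open PowerSeries in
lemma denom_inv_eq : (∏ i ∈ Finset.range 3, (1 - (X : PowerSeries ℚ) ^ (i + 1)))⁻¹ = CC := by
  rw [PowerSeries.inv_eq_iff_mul_eq_one]
  · exact CC_mul_denom
  · rw [Finset.prod_range_succ, Finset.prod_range_succ, Finset.prod_range_succ,
      Finset.prod_range_zero, one_mul]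
    simp [map_sub, map_pow, constantCoeff_X]

open PowerSeries in
lemma gauss_eq (ℓ k : ℕ) (hk : k < 2*ℓ+3) :
    gaussCoeff ℓ 3 k = (cc k : ℚ)
      - (if ℓ+1 ≤ k then (cc (k-(ℓ+1)) : ℚ) else 0)
      - (if ℓ+2 ≤ k then (cc (k-(ℓ+2)) : ℚ) else 0)
      - (if ℓ+3 ≤ k then (cc (k-(ℓ+3)) : ℚ) else 0) := by
  unfold gaussCoeff
  rw [denom_inv_eq]
  have hN : (∏ i ∈ Finset.range 3, (1 - (X : PowerSeries ℚ) ^ (ℓ + i + 1))) * CC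
      = CC - CC*X^(ℓ+1) - CC*X^(ℓ+2) - CC*X^(ℓ+3) + CC*X^(2*ℓ+3) + CC*X^(2*ℓ+4)
        + CC*X^(2*ℓ+5) - CC*X^(3*ℓ+6) := by
    rw [Finset.prod_range_succ, Finset.prod_range_succ, Finset.prod_range_succ,
      Finset.prod_range_zero, one_mul]
    rw [show ℓ+0+1 = ℓ+1 from by ring, show ℓ+1+1 = ℓ+2 from by ring,
        show ℓ+2+1 = ℓ+3 from by ring,
        show 2*ℓ+3 = (ℓ+1)+(ℓ+2) from by ring, show 2*ℓ+4 = (ℓ+1)+(ℓ+3) from by ring,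
        show 2*ℓ+5 = (ℓ+2)+(ℓ+3) from by ring,
        show 3*ℓ+6 = (ℓ+1)+((ℓ+2)+(ℓ+3)) from by ring]
    rw [pow_add, pow_add, pow_add, pow_add, pow_add]
    ring
  rw [hN]
  simp only [map_sub, map_add, coeff_mul_X_pow', coeff_CC]
  rw [if_neg (by omega : ¬ 2*ℓ+3 ≤ k), if_neg (by omega : ¬ 2*ℓ+4 ≤ k),
      if_neg (by omega : ¬ 2*ℓ+5 ≤ k), if_neg (by omega : ¬ 3*ℓ+6 ≤ k)]
  ring

theorem three_strict_m3 (ℓ : ℕ) (hℓ : 1 ≤ ℓ) (k : ℕ) (h1 : 13 ≤ k)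
    (h2 : k ≤ 3 * ℓ / 2 - 10) :
    gaussCoeff ℓ 3 (k + 1) - gaussCoeff ℓ 3 k ≥ 3 := by
  have hℓ16 : 16 ≤ ℓ := by omega
  rw [gauss_eq ℓ (k+1) (by omega), gauss_eq ℓ k (by omega)]
  have h := keyZ ℓ k h1 h2
  have h' : (((
      ((cc (k+1) : ℤ) - (if ℓ+1 ≤ k+1 then (cc (k+1-(ℓ+1)) : ℤ) else 0)
      - (if ℓ+2 ≤ k+1 then (cc (k+1-(ℓ+2)) : ℤ) else 0)
      - (if ℓ+3 ≤ k+1 then (cc (k+1-(ℓ+3)) : ℤ) else 0))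
    - ((cc k : ℤ) - (if ℓ+1 ≤ k then (cc (k-(ℓ+1)) : ℤ) else 0)
      - (if ℓ+2 ≤ k then (cc (k-(ℓ+2)) : ℤ) else 0)
      - (if ℓ+3 ≤ k then (cc (k-(ℓ+3)) : ℤ) else 0))) : ℤ) : ℚ) ≥ ((3:ℤ):ℚ) := by
    exact_mod_cast h
  push_cast [apply_ite (Int.cast : ℤ → ℚ)] at h'
  push_cast at h' ⊢
  linarith [h']
end

section
/- For all integers ℓ ≥ 1 and all k with 25 ≤ k ≤ ⌊3ℓ/2⌋ - 16, the coefficients of binom{ℓ+3}{3}_q satisfy p_{k+1}(ℓ,3) - p_k(ℓ,3) ≥ 5, with no exceptions. -/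
set_option maxHeartbeats 1000000

open PowerSeries

/-- number of partitions into parts 2 and 3 -/
def gnat (n : ℕ) : ℕ := n / 6 + (if n % 6 = 1 then 0 else 1)

noncomputable def Gs : PowerSeries ℚ := PowerSeries.mk fun n => (gnat n : ℚ)

lemma key_int (n : ℕ) :
    (gnat n : ℤ) - (if 2 ≤ n then (gnat (n-2) : ℤ) else 0)
      - (if 3 ≤ n then (gnat (n-3) : ℤ) else 0)
      + (if 5 ≤ n then (gnat (n-5) : ℤ) else 0) = if n = 0 then 1 else 0 := by
  simp only [gnat]
  split_ifs <;> push_cast <;> omega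

lemma Gs_mul : Gs * ((1 - (X : PowerSeries ℚ)^2) * (1 - X^3)) = 1 := by
  have expand : Gs * ((1 - (X : PowerSeries ℚ)^2) * (1 - X^3))
      = Gs - X^2 * Gs - X^3 * Gs + X^5 * Gs := by ring
  rw [expand]
  ext n
  simp only [map_add, map_sub, coeff_X_pow_mul', coeff_one, Gs, coeff_mk]
  have h := key_int n
  split_ifs at h ⊢ <;> exact_mod_cast h

lemma diff_eq (ℓ k : ℕ) :
    gaussCoeff ℓ 3 (k+1) - gaussCoeff ℓ 3 k =
      PowerSeries.coeff (R := ℚ) (k+1)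
        ((1 - (X : PowerSeries ℚ)^(ℓ+1)) * (1 - X^(ℓ+2)) * (1 - X^(ℓ+3)) * Gs) := by
  set N : PowerSeries ℚ := (1 - (X : PowerSeries ℚ)^(ℓ+1)) * (1 - X^(ℓ+2)) * (1 - X^(ℓ+3)) with hN
  set D : PowerSeries ℚ := (1 - (X : PowerSeries ℚ)^1) * (1 - X^2) * (1 - X^3) with hD
  have hgc : ∀ j, gaussCoeff ℓ 3 j = PowerSeries.coeff (R := ℚ) j (N * D⁻¹) := by
    intro j
    unfold gaussCoeff
    congr 2
    · simp [Finset.prod_range_succ, hN]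
    · congr 1
      simp [Finset.prod_range_succ, hD]
  have hDconst : (constantCoeff (R := ℚ)) D ≠ 0 := by
    simp [hD, map_sub, map_pow, constantCoeff_X]
  have hDne : D ≠ 0 := fun h => hDconst (by simp [h])
  have main : (1 - (X : PowerSeries ℚ)) * (N * D⁻¹) = N * Gs := by
    apply mul_right_cancel₀ hDne
    have hinv : D⁻¹ * D = 1 := PowerSeries.inv_mul_cancel D hDconst
    calc (1 - (X : PowerSeries ℚ)) * (N * D⁻¹) * D
        = (1 - X) * N * (D⁻¹ * D) := by ring
      _ = (1 - X) * N := by rw [hinv, mul_one]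
      _ = N * (Gs * ((1 - X^2) * (1 - X^3))) * (1 - X) := by rw [Gs_mul]; ring
      _ = N * Gs * D := by rw [hD]; ring_nf
  have expand : (1 - (X : PowerSeries ℚ)) * (N * D⁻¹) = N * D⁻¹ - X * (N * D⁻¹) := by ring
  rw [hgc, hgc]
  have := congrArg (PowerSeries.coeff (R := ℚ) (k+1)) main
  rw [expand, map_sub, coeff_succ_X_mul] at this
  linarith [this]

theorem five_strict_m3 (ℓ : ℕ) (hℓ : 1 ≤ ℓ) (k : ℕ) (h1 : 25 ≤ k)
    (h2 : k ≤ 3 * ℓ / 2 - 16) :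
    gaussCoeff ℓ 3 (k + 1) - gaussCoeff ℓ 3 k ≥ 5 := by
  rw [diff_eq]
  have expand : (1 - (X : PowerSeries ℚ)^(ℓ+1)) * (1 - X^(ℓ+2)) * (1 - X^(ℓ+3)) * Gs
      = Gs - X^(ℓ+1)*Gs - X^(ℓ+2)*Gs - X^(ℓ+3)*Gs
        + X^(2*ℓ+3)*Gs + X^(2*ℓ+4)*Gs + X^(2*ℓ+5)*Gs - X^(3*ℓ+6)*Gs := by ring
  rw [expand]
  simp only [map_add, map_sub, coeff_X_pow_mul', Gs, coeff_mk]
  have h3 : ¬ (2*ℓ+3 ≤ k+1) := by omega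
  have h4 : ¬ (2*ℓ+4 ≤ k+1) := by omega
  have h5 : ¬ (2*ℓ+5 ≤ k+1) := by omega
  have h6 : ¬ (3*ℓ+6 ≤ k+1) := by omega
  rw [if_neg h3, if_neg h4, if_neg h5, if_neg h6]
  have h2' : 2 * k + 32 ≤ 3 * ℓ := by omega
  clear h2
  have key : (gnat (k+1) : ℤ) - (if ℓ+1 ≤ k+1 then (gnat (k+1-(ℓ+1)) : ℤ) else 0)
      - (if ℓ+2 ≤ k+1 then (gnat (k+1-(ℓ+2)) : ℤ) else 0)
      - (if ℓ+3 ≤ k+1 then (gnat (k+1-(ℓ+3)) : ℤ) else 0) ≥ 5 := by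
    simp only [gnat]
    split_ifs <;> push_cast <;> omega
  simp only [add_zero, sub_zero]
  split_ifs at key ⊢ <;> exact_mod_cast key
end
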